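/- The generating function A*(x) counting by semilength the Dyck paths avoiding UUU and DUD and starting with UUD (or empty) satisfies the functional equation A*(x) = 1 + x^2 A*(x) / (1 - x^2 A*(x)). -/

import Mathlib

/-- Every prefix of the path has nonnegative sum (the path stays weakly above the x-axis). -/
def NonnegPrefixes (w : List ℤ) : Prop := ∀ p ∈ w.inits, 0 ≤ p.sum

/-- A Dyck word: steps U = 1 and D = -1, nonnegative prefixes, ending at height 0. -/
def IsDyckWord (w : List ℤ) : Prop :=
  (∀ s ∈ w, s = 1 ∨ s = -1) ∧ NonnegPrefixes w ∧ w.sum = 0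

/-- A Motzkin path: steps U = 1, F = 0, D = -1, nonnegative prefixes, ending at height 0. -/
def IsMotzkinWord (w : List ℤ) : Prop :=
  (∀ s ∈ w, s = 1 ∨ s = 0 ∨ s = -1) ∧ NonnegPrefixes w ∧ w.sum = 0

/-- A Dyck meander with catastrophes: steps U = 1, D = -1, D_i = -i (i ≥ 2),
nonnegative, and every catastrophe step D_i (i ≥ 2) lands exactly at height 0. -/
def IsDyckMeanderCat (w : List ℤ) : Prop :=
  (∀ s ∈ w, s = 1 ∨ s ≤ -1) ∧ NonnegPrefixes w ∧
    ∀ i, i < w.length → w.getD i 0 ≤ -2 → (w.take (i+1)).sum = 0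

/-- A Motzkin meander with catastrophes: steps U = 1, F = 0, D = -1, D_i = -i (i ≥ 2),
nonnegative, every catastrophe landing exactly at height 0. -/
def IsMotzkinMeanderCat (w : List ℤ) : Prop :=
  (∀ s ∈ w, s ≤ 1) ∧ NonnegPrefixes w ∧
    ∀ i, i < w.length → w.getD i 0 ≤ -2 → (w.take (i+1)).sum = 0

def IsDyckExcursionCat (w : List ℤ) : Prop := IsDyckMeanderCat w ∧ w.sum = 0

def IsMotzkinExcursionCat (w : List ℤ) : Prop := IsMotzkinMeanderCat w ∧ w.sum = 0

/-- The factor `pat` occurs in `w` starting at position `i`. -/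
def OccursAt (pat w : List ℤ) (i : ℕ) : Prop := pat <+: w.drop i

/-- `w` has no occurrence of the factor `pat`. -/
def Avoids (pat w : List ℤ) : Prop := ∀ i, ¬ OccursAt pat w i

/-- `w` has no occurrence of `pat` starting at height h > 0. -/
def AvoidsAtPosHeight (pat w : List ℤ) : Prop :=
  ∀ i, OccursAt pat w i → (w.take i).sum ≤ 0

/-- `w` has no occurrence of `pat` starting at height h ≥ 2. -/
def AvoidsAtHeightGe2 (pat w : List ℤ) : Prop :=
  ∀ i, OccursAt pat w i → (w.take i).sum < 2

def pUUU : List ℤ := [1, 1, 1]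
def pDUD : List ℤ := [-1, 1, -1]
def pUUD : List ℤ := [1, 1, -1]
def pUD : List ℤ := [1, -1]
def pDU : List ℤ := [-1, 1]

lemma getD_drop' (w : List ℤ) (i j : ℕ) : (w.drop i).getD j 0 = w.getD (i+j) 0 := by
  simp [List.getD_eq_getElem?_getD, List.getElem?_drop]

lemma nonnegPrefixes_iff {w : List ℤ} : NonnegPrefixes w ↔ ∀ n, 0 ≤ (w.take n).sum := by
  constructor
  · intro h n
    exact h _ ((List.mem_inits _ _).2 (List.take_prefix n w))
  · intro h p hp
    obtain ⟨n, rfl⟩ : ∃ n, p = w.take n :=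
      ⟨p.length, List.prefix_iff_eq_take.1 ((List.mem_inits _ _).1 hp)⟩
    exact h n

lemma occursAt_iff {a b c : ℤ} {w : List ℤ} {i : ℕ} :
    OccursAt [a,b,c] w i ↔ i + 3 ≤ w.length ∧
      w.getD i 0 = a ∧ w.getD (i+1) 0 = b ∧ w.getD (i+2) 0 = c := by
  unfold OccursAt
  constructor
  · rintro ⟨t, ht⟩
    have hlen : i + 3 ≤ w.length := by
      have := congrArg List.length ht
      simp [List.length_drop] at this
      omega
    have h0 : ∀ j : ℕ, (w.drop i).getD j 0 = ([a,b,c] ++ t).getD j 0 := by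
      intro j; rw [ht]
    refine ⟨hlen, ?_, ?_, ?_⟩
    · have := h0 0; rw [getD_drop'] at this; simpa using this
    · have := h0 1; rw [getD_drop'] at this; simpa using this
    · have := h0 2; rw [getD_drop'] at this; simpa using this
  · rintro ⟨hlen, h0, h1, h2⟩
    refine ⟨w.drop (i+3), ?_⟩
    have hl : (w.drop i).length = w.length - i := List.length_drop
    match hd : w.drop i with
    | [] => simp [hd] at hl; omega
    | [x] => simp [hd] at hl; omega
    | [x, y] => simp [hd] at hl; omega
    | x :: y :: z :: t =>
      have e0 := getD_drop' w i 0
      have e1 := getD_drop' w i 1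
      have e2 := getD_drop' w i 2
      rw [hd] at e0 e1 e2
      simp at e0 e1 e2
      have ht : w.drop (i + 3) = t := by
        rw [← List.drop_drop, hd]; rfl
      rw [ht]
      have ex : x = a := by rw [e0, ← List.getD_eq_getElem?_getD]; exact h0
      have ey : y = b := by rw [e1, ← List.getD_eq_getElem?_getD]; exact h1
      have ez : z = c := by rw [e2, ← List.getD_eq_getElem?_getD]; exact h2
      rw [ex, ey, ez]
      rfl

def Mem (w : List ℤ) : Prop :=
  IsDyckWord w ∧ Avoids pUUU w ∧ Avoids pDUD w ∧ (w = [] ∨ pUUD <+: w)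

lemma sum_take_succ' (w : List ℤ) (i : ℕ) (h : i < w.length) :
    (w.take (i+1)).sum = (w.take i).sum + w.getD i 0 := by
  rw [List.sum_take_succ _ _ h, List.getD_eq_getElem _ _ h]

lemma dyck_nonneg {w : List ℤ} (h : IsDyckWord w) (n : ℕ) : 0 ≤ (w.take n).sum :=
  nonnegPrefixes_iff.1 h.2.1 n

lemma dyck_last {w : List ℤ} (h : IsDyckWord w) (hne : w ≠ []) :
    w.getD (w.length - 1) 0 = -1 := by
  have hl : 0 < w.length := List.length_pos_iff.2 hne
  have h1 := sum_take_succ' w (w.length - 1) (by omega)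
  rw [show w.length - 1 + 1 = w.length by omega, List.take_length] at h1
  have h2 := dyck_nonneg h (w.length - 1)
  have h3 := h.2.2
  have h4 : w.getD (w.length - 1) 0 = 1 ∨ w.getD (w.length - 1) 0 = -1 := by
    apply h.1
    rw [List.getD_eq_getElem _ _ (by omega)]
    exact List.getElem_mem _
  omega

lemma dyck_first {w : List ℤ} (h : IsDyckWord w) (hne : w ≠ []) : w.getD 0 0 = 1 := by
  have hl : 0 < w.length := List.length_pos_iff.2 hne
  have h1 := sum_take_succ' w 0 hl
  rw [List.take_zero, List.sum_nil, zero_add] at h1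
  have h2 := dyck_nonneg h 1
  have h4 : w.getD 0 0 = 1 ∨ w.getD 0 0 = -1 := by
    apply h.1
    rw [List.getD_eq_getElem _ _ (by omega)]
    exact List.getElem_mem _
  omega

lemma mem_head_facts {w : List ℤ} (h : Mem w) (hne : w ≠ []) :
    4 ≤ w.length ∧ w.getD 0 0 = 1 ∧ w.getD 1 0 = 1 ∧ w.getD 2 0 = -1 := by
  rcases h.2.2.2 with rfl | ⟨r, hr⟩
  · exact absurd rfl hne
  · have hw : w = 1 :: 1 :: -1 :: r := by rw [← hr]; rfl
    subst hw
    have hr4 : r ≠ [] := by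
      rintro rfl
      have := h.1.2.2
      simp [pUUD] at this
    have : 0 < r.length := List.length_pos_iff.2 hr4
    refine ⟨by simp; omega, rfl, rfl, rfl⟩

lemma sum_take_append (x y : List ℤ) (n : ℕ) :
    ((x ++ y).take n).sum = (x.take n).sum + (y.take (n - x.length)).sum := by
  rw [List.take_append, List.sum_append]

lemma s3_nonneg (n : ℕ) : 0 ≤ (([1,1,-1] : List ℤ).take n).sum := by
  match n with
  | 0 => simp
  | 1 => simp
  | 2 => simp
  | (m+3) => simp [List.take_succ_cons]

lemma s3_ge3 (n : ℕ) (h : 3 ≤ n) : (([1,1,-1] : List ℤ).take n).sum = 1 := by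
  match n with
  | (m+3) => simp [List.take_succ_cons]

lemma s1_val (n : ℕ) : (([-1] : List ℤ).take n).sum = if n = 0 then 0 else -1 := by
  match n with
  | 0 => simp
  | (m+1) => simp [List.take_succ_cons]

section Construct
variable (α β : List ℤ)

lemma W_len : ([1,1,-1] ++ α ++ [-1] ++ β).length = 4 + α.length + β.length := by
  simp; omega

lemma W_g0 : ([1,1,-1] ++ α ++ [-1] ++ β).getD 0 0 = 1 := rfl
lemma W_g1 : ([1,1,-1] ++ α ++ [-1] ++ β).getD 1 0 = 1 := rfl
lemma W_g2 : ([1,1,-1] ++ α ++ [-1] ++ β).getD 2 0 = -1 := rfl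

lemma W_galpha (j : ℕ) (hj : j < α.length) :
    ([1,1,-1] ++ α ++ [-1] ++ β).getD (3+j) 0 = α.getD j 0 := by
  rw [show [1,1,-1] ++ α ++ [-1] ++ β = [1,1,-1] ++ (α ++ ([-1] ++ β)) by simp,
    List.getD_append_right _ _ _ _ (by simp),
    List.getD_append _ _ _ _ (by simp only [List.length_cons, List.length_nil]; omega)]
  congr 1
  simp only [List.length_cons, List.length_nil]
  omega

lemma W_gmid : ([1,1,-1] ++ α ++ [-1] ++ β).getD (3 + α.length) 0 = -1 := by
  rw [List.getD_append _ _ _ _ (by simp; omega),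
    List.getD_append_right _ _ _ _ (by simp; omega)]
  have h0 : 3 + α.length - (([1,1,-1] : List ℤ) ++ α).length = 0 := by
    simp only [List.length_append, List.length_cons, List.length_nil]
    omega
  rw [h0]
  rfl

lemma W_gbeta (j : ℕ) :
    ([1,1,-1] ++ α ++ [-1] ++ β).getD (4 + α.length + j) 0 = β.getD j 0 := by
  rw [List.getD_append_right _ _ _ _ (by simp; omega)]
  congr 1
  simp
  omega

lemma W_sum_take (n : ℕ) : (([1,1,-1] ++ α ++ [-1] ++ β).take n).sum =
    (([1,1,-1] : List ℤ).take n).sum + (α.take (n-3)).sum +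
      (([-1] : List ℤ).take (n-3-α.length)).sum + (β.take (n-3-α.length-1)).sum := by
  rw [show [1,1,-1] ++ α ++ [-1] ++ β = [1,1,-1] ++ (α ++ ([-1] ++ β)) by simp,
    sum_take_append, sum_take_append, sum_take_append]
  simp only [List.length_cons, List.length_nil]
  ring

lemma W_dyck (ha : IsDyckWord α) (hb : IsDyckWord β) :
    IsDyckWord ([1,1,-1] ++ α ++ [-1] ++ β) := by
  refine ⟨?_, ?_, ?_⟩
  · intro s hs
    simp only [List.mem_append, List.mem_cons, List.mem_singleton] at hs
    rcases hs with ((h|h)|h)|h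
    · rcases h with h|h|h|h <;> simp_all
    · exact ha.1 s h
    · simp_all
    · exact hb.1 s h
  · rw [nonnegPrefixes_iff]
    intro n
    rw [W_sum_take]
    have hs3 := s3_nonneg n
    have hs1 := s1_val (n - 3 - α.length)
    have hsa := dyck_nonneg ha (n - 3)
    have hsb := dyck_nonneg hb (n - 3 - α.length - 1)
    by_cases hc : n - 3 - α.length = 0
    · have hs1' : (([-1] : List ℤ).take (n-3-α.length)).sum = 0 := by
        rw [hc]
        simp
      omega
    · rw [if_neg hc] at hs1
      have h3 : (([1,1,-1] : List ℤ).take n).sum = 1 := s3_ge3 n (by omega)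
      have hfull : α.take (n - 3) = α := List.take_of_length_le (by omega)
      rw [hfull] at hsa ⊢
      rw [ha.2.2]
      omega
  · simp only [List.sum_append, ha.2.2, hb.2.2]
    simp

lemma mem_construct {α β : List ℤ} (ha : Mem α) (hb : Mem β) :
    Mem ([1,1,-1] ++ α ++ [-1] ++ β) := by
  have hW := W_dyck α β ha.1 hb.1
  have hlen := W_len α β
  refine ⟨hW, ?_, ?_, Or.inr ⟨α ++ [-1] ++ β, by simp [pUUD]⟩⟩
  · -- Avoids UUU
    intro i hocc
    rw [show pUUU = [(1:ℤ),1,1] from rfl, occursAt_iff] at hocc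
    obtain ⟨hl, h0, h1, h2⟩ := hocc
    rw [hlen] at hl
    by_cases c1 : i ≤ 2
    · interval_cases i
      · rw [W_g2] at h2; norm_num at h2
      · rw [W_g2] at h1; norm_num at h1
      · rw [W_g2] at h0; norm_num at h0
    · by_cases c2 : i + 3 ≤ 3 + α.length
      · refine ha.2.1 (i - 3) ?_
        rw [show pUUU = [(1:ℤ),1,1] from rfl, occursAt_iff]
        refine ⟨by omega, ?_, ?_, ?_⟩
        · rw [← W_galpha α β (i-3) (by omega), show 3+(i-3) = i by omega]; exact h0
        · rw [← W_galpha α β (i-3+1) (by omega), show 3+(i-3+1) = i+1 by omega]; exact h1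
        · rw [← W_galpha α β (i-3+2) (by omega), show 3+(i-3+2) = i+2 by omega]; exact h2
      · by_cases c3 : i ≤ 3 + α.length
        · have hm := W_gmid α β
          rcases (by omega : i = 3 + α.length ∨ i + 1 = 3 + α.length ∨ i + 2 = 3 + α.length)
            with h|h|h
          · rw [← h] at hm; rw [hm] at h0; norm_num at h0
          · rw [← h] at hm; rw [hm] at h1; norm_num at h1
          · rw [← h] at hm; rw [hm] at h2; norm_num at h2
        · refine hb.2.1 (i - 4 - α.length) ?_
          rw [show pUUU = [(1:ℤ),1,1] from rfl, occursAt_iff]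
          refine ⟨by omega, ?_, ?_, ?_⟩
          · rw [← W_gbeta α β (i-4-α.length),
              show 4+α.length+(i-4-α.length) = i by omega]; exact h0
          · rw [← W_gbeta α β (i-4-α.length+1),
              show 4+α.length+(i-4-α.length+1) = i+1 by omega]; exact h1
          · rw [← W_gbeta α β (i-4-α.length+2),
              show 4+α.length+(i-4-α.length+2) = i+2 by omega]; exact h2
  · -- Avoids DUD
    intro i hocc
    rw [show pDUD = [(-1:ℤ),1,-1] from rfl, occursAt_iff] at hocc
    obtain ⟨hl, h0, h1, h2⟩ := hocc
    rw [hlen] at hl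
    by_cases c1 : i ≤ 1
    · interval_cases i
      · rw [W_g0] at h0; norm_num at h0
      · rw [W_g1] at h0; norm_num at h0
    · by_cases c1' : i = 2
      · subst c1'
        by_cases hk0 : α.length = 0
        · have hm := W_gmid α β
          rw [show (2:ℕ)+1 = 3 + α.length by omega] at h1
          rw [hm] at h1
          norm_num at h1
        · have hane : α ≠ [] := fun h => hk0 (by simp [h])
          obtain ⟨ha4, hg0, hg1, hg2⟩ := mem_head_facts ha hane
          rw [show (2:ℕ)+2 = 3+1 by rfl, W_galpha α β 1 (by omega), hg1] at h2
          norm_num at h2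
      · by_cases c2 : i + 3 ≤ 3 + α.length
        · refine ha.2.2.1 (i - 3) ?_
          rw [show pDUD = [(-1:ℤ),1,-1] from rfl, occursAt_iff]
          refine ⟨by omega, ?_, ?_, ?_⟩
          · rw [← W_galpha α β (i-3) (by omega), show 3+(i-3) = i by omega]; exact h0
          · rw [← W_galpha α β (i-3+1) (by omega), show 3+(i-3+1) = i+1 by omega]; exact h1
          · rw [← W_galpha α β (i-3+2) (by omega), show 3+(i-3+2) = i+2 by omega]; exact h2
        · by_cases c3 : i ≤ 3 + α.length
          · rcases (by omega : i + 2 = 3 + α.length ∨ i + 1 = 3 + α.length ∨ i = 3 + α.length)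
              with h|h|h
            · have hane : α ≠ [] := by
                intro hh
                rw [hh] at h
                simp at h
                omega
              have hlast := dyck_last ha.1 hane
              rw [show i+1 = 3 + (α.length-1) by omega,
                W_galpha α β (α.length-1) (by omega), hlast] at h1
              norm_num at h1
            · have hm := W_gmid α β
              rw [← h] at hm
              rw [hm] at h1
              norm_num at h1
            · have hbne : β ≠ [] := by
                intro hh
                rw [hh] at hl
                simp at hl
                omega
              obtain ⟨hb4, hg0, hg1, hg2⟩ := mem_head_facts hb hbne
              rw [show i+2 = 4 + α.length + 1 by omega, W_gbeta α β 1, hg1] at h2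
              norm_num at h2
          · refine hb.2.2.1 (i - 4 - α.length) ?_
            rw [show pDUD = [(-1:ℤ),1,-1] from rfl, occursAt_iff]
            refine ⟨by omega, ?_, ?_, ?_⟩
            · rw [← W_gbeta α β (i-4-α.length),
                show 4+α.length+(i-4-α.length) = i by omega]; exact h0
            · rw [← W_gbeta α β (i-4-α.length+1),
                show 4+α.length+(i-4-α.length+1) = i+1 by omega]; exact h1
            · rw [← W_gbeta α β (i-4-α.length+2),
                show 4+α.length+(i-4-α.length+2) = i+2 by omega]; exact h2

end Construct

lemma avoids_of_middle {pat x y z : List ℤ}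
    (h : Avoids pat (x ++ y ++ z)) : Avoids pat y := by
  intro j hocc
  obtain ⟨t, ht⟩ := hocc
  refine h (x ++ y.take j).length ?_
  unfold OccursAt
  have e : x ++ y ++ z = (x ++ y.take j) ++ (pat ++ (t ++ z)) := by
    conv_lhs => rw [show y = y.take j ++ y.drop j from (List.take_append_drop j y).symm, ← ht]
    simp
  rw [e, List.drop_left]
  exact ⟨t ++ z, by simp⟩

lemma take_drop_sum (v : List ℤ) (i n : ℕ) :
    ((v.drop i).take n).sum = (v.take (i + n)).sum - (v.take i).sum := by
  have : v.take (i + n) = v.take i ++ (v.drop i).take n := List.take_add ..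
  rw [this, List.sum_append]
  ring

lemma mem_decompose {w : List ℤ} (h : Mem w) (hne : w ≠ []) :
    ∃ α β, Mem α ∧ Mem β ∧ w = [1,1,-1] ++ α ++ [-1] ++ β := by
  classical
  obtain ⟨h4, hg0, hg1, hg2⟩ := mem_head_facts h hne
  obtain ⟨v, hv⟩ : ∃ v, w = [1,1,-1] ++ v := by
    rcases h.2.2.2 with rfl | ⟨r, hr⟩
    · exact absurd rfl hne
    · exact ⟨r, hr.symm⟩
  have hvlen : w.length = 3 + v.length := by rw [hv]; simp; omega
  have hvsum : v.sum = -1 := by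
    have := h.1.2.2
    rw [hv] at this
    simp at this
    linarith
  have hvtake : ∀ n, (v.take n).sum = (w.take (3 + n)).sum - 1 := by
    intro n
    rw [hv, sum_take_append]
    have : (([1,1,-1] : List ℤ).take (3+n)).sum = 1 := s3_ge3 _ (by omega)
    rw [this]
    simp only [List.length_cons, List.length_nil]
    rw [show 3 + n - 3 = n by omega]
    ring
  have hvelt : ∀ n, n < v.length → v.getD n 0 = 1 ∨ v.getD n 0 = -1 := by
    intro n hn
    apply h.1.1
    rw [hv]
    rw [List.getD_eq_getElem _ _ hn]
    simp [List.mem_append]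
  have hP : ∃ n, (v.take n).sum < 0 := ⟨v.length, by rw [List.take_length, hvsum]; norm_num⟩
  obtain ⟨i, hPi, hmin⟩ : ∃ i, (v.take i).sum < 0 ∧ ∀ m, m < i → 0 ≤ (v.take m).sum :=
    ⟨Nat.find hP, Nat.find_spec hP, fun m hm => by
      have h1 := Nat.find_min hP hm
      have h2 := hvelt m
      by_contra hc
      push_neg at hc
      exact h1 hc⟩
  have hi1 : 1 ≤ i := by
    by_contra hc
    push_neg at hc
    interval_cases i
    simp at hPi
  have hile : i ≤ v.length := by
    by_contra hc
    push_neg at hc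
    have : v.take i = v := List.take_of_length_le (by omega)
    rw [this, hvsum] at hPi
    have := hmin v.length hc
    rw [List.take_length, hvsum] at this
    norm_num at this
  have hstep := sum_take_succ' v (i-1) (by omega)
  rw [show i - 1 + 1 = i by omega] at hstep
  have hprev := hmin (i-1) (by omega)
  have helt := hvelt (i-1) (by omega)
  have hgi : v.getD (i-1) 0 = -1 := by omega
  have hsum0 : (v.take (i-1)).sum = 0 := by omega
  have hsumi : (v.take i).sum = -1 := by omega
  obtain ⟨α, hα⟩ : ∃ α, α = v.take (i-1) := ⟨_, rfl⟩
  obtain ⟨β, hβ⟩ : ∃ β, β = v.drop i := ⟨_, rfl⟩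
  rw [← hα] at hsum0
  have hveq : v = α ++ [-1] ++ β := by
    rw [hα, hβ]
    have h1 : v = v.take (i-1) ++ v.drop (i-1) := (List.take_append_drop _ v).symm
    have h2 : v.drop (i-1) = v.getD (i-1) 0 :: v.drop (i-1+1) := by
      rw [List.drop_eq_getElem_cons (by omega : i-1 < v.length),
        List.getD_eq_getElem _ _ (by omega : i-1 < v.length)]
    rw [hgi, show i-1+1 = i by omega] at h2
    rw [h2] at h1
    conv_lhs => rw [h1]
    simp
  have hweq : w = [1,1,-1] ++ α ++ [-1] ++ β := by rw [hv, hveq]; simp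
  have hαlen : α.length = i - 1 := by rw [hα, List.length_take]; omega
  have hβlen : β.length = v.length - i := by rw [hβ, List.length_drop]
  -- α is a Dyck word
  have hαd : IsDyckWord α := by
    refine ⟨?_, ?_, ?_⟩
    · intro s hs
      apply h.1.1
      rw [hweq]
      simp only [List.mem_append]
      left; left; right
      exact hs
    · rw [nonnegPrefixes_iff]
      intro n
      rw [hα, List.take_take]
      by_cases hn : n < i - 1
      · exact hmin (min n (i-1)) (by omega)
      · rw [min_eq_right (by omega), ← hα, hsum0]
    · rw [hα] at hsum0 ⊢; exact hsum0
  have hβd : IsDyckWord β := by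
    refine ⟨?_, ?_, ?_⟩
    · intro s hs
      apply h.1.1
      rw [hweq]
      simp only [List.mem_append]
      right
      exact hs
    · rw [nonnegPrefixes_iff]
      intro n
      rw [hβ, take_drop_sum, hsumi]
      have h1 := hvtake (i + n)
      have h2 := nonnegPrefixes_iff.1 h.1.2.1 (3 + (i+n))
      omega
    · rw [hβ]
      have : (v.drop i).sum = v.sum - (v.take i).sum := by
        conv_lhs => rw [show v.drop i = (v.drop i).take (v.drop i).length from
          List.take_length.symm]
        rw [take_drop_sum]
        rw [List.take_of_length_le (by simp; omega)]
      rw [this, hvsum, hsumi]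
      ring
  have hαavU : Avoids pUUU α := by
    have := h.2.1
    rw [hweq] at this
    exact avoids_of_middle (x := [1,1,-1]) (z := [-1] ++ β)
      (by rw [show ([1,1,-1] : List ℤ) ++ α ++ ([-1] ++ β) = [1,1,-1] ++ α ++ [-1] ++ β by simp]
          exact this)
  have hαavD : Avoids pDUD α := by
    have := h.2.2.1
    rw [hweq] at this
    exact avoids_of_middle (x := [1,1,-1]) (z := [-1] ++ β)
      (by rw [show ([1,1,-1] : List ℤ) ++ α ++ ([-1] ++ β) = [1,1,-1] ++ α ++ [-1] ++ β by simp]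
          exact this)
  have hβavU : Avoids pUUU β := by
    have := h.2.1
    rw [hweq] at this
    exact avoids_of_middle (x := [1,1,-1] ++ α ++ [-1]) (z := [])
      (by rw [show ([1,1,-1] ++ α ++ [-1]) ++ β ++ ([] : List ℤ) = [1,1,-1] ++ α ++ [-1] ++ β
            by simp]
          exact this)
  have hβavD : Avoids pDUD β := by
    have := h.2.2.1
    rw [hweq] at this
    exact avoids_of_middle (x := [1,1,-1] ++ α ++ [-1]) (z := [])
      (by rw [show ([1,1,-1] ++ α ++ [-1]) ++ β ++ ([] : List ℤ) = [1,1,-1] ++ α ++ [-1] ++ β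
            by simp]
          exact this)
  -- heads
  have hwlen2 : w.length = 4 + α.length + β.length := by rw [hweq]; exact W_len α β
  have hsize2 : ∀ γ : List ℤ, IsDyckWord γ → γ ≠ [] → 2 ≤ γ.length := by
    intro γ hγ hγne
    by_contra hc
    push_neg at hc
    have h1 : γ.length = 1 := by
      have := List.length_pos_iff.2 hγne
      omega
    have h2 := sum_take_succ' γ 0 (by omega)
    rw [show (0:ℕ)+1 = γ.length by omega, List.take_length, List.take_zero] at h2
    have h3 := hγ.1 (γ.getD 0 0) (by
      rw [List.getD_eq_getElem _ _ (by omega)]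
      exact List.getElem_mem _)
    rw [hγ.2.2] at h2
    rw [List.sum_nil, zero_add] at h2
    omega
  have hsize3 : ∀ γ : List ℤ, IsDyckWord γ → γ ≠ [] → γ.getD 0 0 = 1 → γ.getD 1 0 = 1 →
      3 ≤ γ.length := by
    intro γ hγ hγne hγ0 hγ1
    by_contra hc
    push_neg at hc
    have h1 : γ.length = 2 := by
      have := hsize2 γ hγ hγne
      omega
    have h2 := sum_take_succ' γ 0 (by omega)
    have h3 := sum_take_succ' γ 1 (by omega)
    rw [show (1:ℕ)+1 = γ.length by omega, List.take_length] at h3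
    rw [List.take_zero] at h2
    rw [hγ.2.2] at h3
    rw [List.sum_nil, zero_add] at h2
    omega
  have hαhead : α = [] ∨ pUUD <+: α := by
    by_cases hαne : α = []
    · exact Or.inl hαne
    · right
      have hα0 : α.getD 0 0 = 1 := dyck_first hαd hαne
      have hα1 : α.getD 1 0 = 1 := by
        have h2 := hsize2 α hαd hαne
        have helt1 : α.getD 1 0 = 1 ∨ α.getD 1 0 = -1 := by
          apply hαd.1
          rw [List.getD_eq_getElem _ _ (by omega)]
          exact List.getElem_mem _
        rcases helt1 with h'|h'
        · exact h'
        · exfalso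
          apply h.2.2.1 2
          rw [show pDUD = [(-1:ℤ),1,-1] from rfl, occursAt_iff, hweq]
          refine ⟨by rw [W_len]; omega, ?_, ?_, ?_⟩
          · exact W_g2 α β
          · rw [show (2:ℕ)+1 = 3+0 by rfl, W_galpha α β 0 (by omega)]
            exact hα0
          · rw [show (2:ℕ)+2 = 3+1 by rfl, W_galpha α β 1 (by omega)]
            exact h'
      have hα2 : α.getD 2 0 = -1 := by
        have h3 := hsize3 α hαd hαne hα0 hα1
        have helt2 : α.getD 2 0 = 1 ∨ α.getD 2 0 = -1 := by
          apply hαd.1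
          rw [List.getD_eq_getElem _ _ (by omega)]
          exact List.getElem_mem _
        rcases helt2 with h'|h'
        · exfalso
          apply h.2.1 3
          rw [show pUUU = [(1:ℤ),1,1] from rfl, occursAt_iff, hweq]
          refine ⟨by rw [W_len]; omega, ?_, ?_, ?_⟩
          · rw [show (3:ℕ) = 3+0 by rfl, W_galpha α β 0 (by omega)]; exact hα0
          · rw [show (3:ℕ)+1 = 3+1 by rfl, W_galpha α β 1 (by omega)]; exact hα1
          · rw [show (3:ℕ)+2 = 3+2 by rfl, W_galpha α β 2 (by omega)]; exact h'
        · exact h'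
      have : OccursAt pUUD α 0 := by
        rw [show pUUD = [(1:ℤ),1,-1] from rfl, occursAt_iff]
        exact ⟨by have := hsize3 α hαd hαne hα0 hα1; omega, hα0, hα1, hα2⟩
      unfold OccursAt at this
      rwa [List.drop_zero] at this
  have hβhead : β = [] ∨ pUUD <+: β := by
    by_cases hβne : β = []
    · exact Or.inl hβne
    · right
      have hβ0 : β.getD 0 0 = 1 := dyck_first hβd hβne
      have hβ1 : β.getD 1 0 = 1 := by
        have h2 := hsize2 β hβd hβne
        have helt1 : β.getD 1 0 = 1 ∨ β.getD 1 0 = -1 := by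
          apply hβd.1
          rw [List.getD_eq_getElem _ _ (by omega)]
          exact List.getElem_mem _
        rcases helt1 with h'|h'
        · exact h'
        · exfalso
          apply h.2.2.1 (3 + α.length)
          rw [show pDUD = [(-1:ℤ),1,-1] from rfl, occursAt_iff, hweq]
          refine ⟨by rw [W_len]; omega, ?_, ?_, ?_⟩
          · exact W_gmid α β
          · rw [show 3+α.length+1 = 4+α.length+0 by omega, W_gbeta α β 0]
            exact hβ0
          · rw [show 3+α.length+2 = 4+α.length+1 by omega, W_gbeta α β 1]
            exact h'
      have hβ2 : β.getD 2 0 = -1 := by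
        have h3 := hsize3 β hβd hβne hβ0 hβ1
        have helt2 : β.getD 2 0 = 1 ∨ β.getD 2 0 = -1 := by
          apply hβd.1
          rw [List.getD_eq_getElem _ _ (by omega)]
          exact List.getElem_mem _
        rcases helt2 with h'|h'
        · exfalso
          apply h.2.1 (4 + α.length)
          rw [show pUUU = [(1:ℤ),1,1] from rfl, occursAt_iff, hweq]
          refine ⟨by rw [W_len]; omega, ?_, ?_, ?_⟩
          · rw [show 4+α.length = 4+α.length+0 by omega, W_gbeta α β 0]; exact hβ0
          · rw [show 4+α.length+1 = 4+α.length+1 by omega, W_gbeta α β 1]; exact hβ1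
          · rw [show 4+α.length+2 = 4+α.length+2 by omega, W_gbeta α β 2]; exact h'
        · exact h'
      have : OccursAt pUUD β 0 := by
        rw [show pUUD = [(1:ℤ),1,-1] from rfl, occursAt_iff]
        exact ⟨by have := hsize3 β hβd hβne hβ0 hβ1; omega, hβ0, hβ1, hβ2⟩
      unfold OccursAt at this
      rwa [List.drop_zero] at this
  exact ⟨α, β, ⟨hαd, hαavU, hαavD, hαhead⟩, ⟨hβd, hβavU, hβavD, hβhead⟩, hweq⟩

lemma construct_lt_false {a b a' b' : List ℤ} (hda : IsDyckWord a) (hda' : IsDyckWord a')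
    (hlt : a.length < a'.length) (he : a ++ ([-1] ++ b) = a' ++ ([-1] ++ b')) : False := by
  have h1 := congrArg (fun l => (List.take (a.length+1) l).sum) he
  have hL : (List.take (a.length+1) (a ++ ([-1] ++ b))).sum = a.sum + (-1) := by
    rw [sum_take_append]
    rw [List.take_of_length_le (by omega)]
    rw [show a.length + 1 - a.length = 1 by omega]
    rw [show (([-1] : List ℤ) ++ b).take 1 = [-1] by rfl]
    rfl
  have hR : (List.take (a.length+1) (a' ++ ([-1] ++ b'))).sum = (a'.take (a.length+1)).sum := by
    rw [sum_take_append]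
    rw [show a.length + 1 - a'.length = 0 by omega]
    rw [List.take_zero]
    simp
  rw [hL, hR] at h1
  have h2 := dyck_nonneg hda' (a.length + 1)
  rw [hda.2.2] at h1
  omega

lemma construct_inj {α β α' β' : List ℤ} (ha : IsDyckWord α) (ha' : IsDyckWord α')
    (heq : [1,1,-1] ++ α ++ [-1] ++ β = [1,1,-1] ++ α' ++ [-1] ++ β') :
    α = α' ∧ β = β' := by
  have e : α ++ ([-1] ++ β) = α' ++ ([-1] ++ β') := by
    have h1 : ([1,1,-1] : List ℤ) ++ (α ++ ([-1] ++ β)) = [1,1,-1] ++ (α' ++ ([-1] ++ β')) := by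
      rw [show ([1,1,-1] : List ℤ) ++ (α ++ ([-1] ++ β)) = [1,1,-1] ++ α ++ [-1] ++ β by simp,
        show ([1,1,-1] : List ℤ) ++ (α' ++ ([-1] ++ β')) = [1,1,-1] ++ α' ++ [-1] ++ β' by simp]
      exact heq
    exact List.append_cancel_left h1
  have hlen : α.length = α'.length := by
    rcases Nat.lt_trichotomy α.length α'.length with h|h|h
    · exact absurd (construct_lt_false ha ha' h e) (fun x => x)
    · exact h
    · exact absurd (construct_lt_false ha' ha h e.symm) (fun x => x)
  obtain ⟨h1, h2⟩ := List.append_inj e hlen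
  refine ⟨h1, ?_⟩
  simpa using h2

lemma finite_fixed (n : ℕ) : {l : List ℤ | l.length = n ∧ ∀ x ∈ l, x = 1 ∨ x = -1}.Finite := by
  induction n with
  | zero =>
    apply Set.Finite.subset (Set.finite_singleton [])
    rintro l ⟨hl, -⟩
    simp [List.length_eq_zero_iff.1 hl]
  | succ n ih =>
    apply Set.Finite.subset
      (Set.Finite.image2 (fun (a : ℤ) (l : List ℤ) => a :: l)
        ((Set.finite_singleton (1:ℤ)).insert (-1)) ih)
    rintro l ⟨hl, hmem⟩
    match l with
    | [] => simp at hl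
    | a :: t =>
      apply Set.mem_image2_of_mem
      · have := hmem a (by simp)
        simp [Set.mem_insert_iff]
        tauto
      · refine ⟨by simpa using hl, fun x hx => hmem x (by simp [hx])⟩

abbrev S (m : ℕ) := {w : List ℤ // IsDyckWord w ∧ w.length = 2 * m ∧
  Avoids pUUU w ∧ Avoids pDUD w ∧ (w = [] ∨ pUUD <+: w)}

lemma S_prop_iff {w : List ℤ} {m : ℕ} :
    (IsDyckWord w ∧ w.length = 2 * m ∧ Avoids pUUU w ∧ Avoids pDUD w ∧ (w = [] ∨ pUUD <+: w))
      ↔ (Mem w ∧ w.length = 2 * m) := by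
  unfold Mem
  tauto

lemma mem_nil : Mem ([] : List ℤ) := by
  refine ⟨⟨by simp, ?_, rfl⟩, ?_, ?_, Or.inl rfl⟩
  · intro p hp
    simp [List.inits] at hp
    simp [hp]
  · rintro i ⟨t, ht⟩
    simp [pUUU] at ht
  · rintro i ⟨t, ht⟩
    simp [pDUD] at ht

instance finite_S (m : ℕ) : Finite (S m) := by
  have h := finite_fixed (2*m)
  haveI := h.to_subtype
  apply Finite.of_injective
    (fun w : S m => (⟨w.1, w.2.2.1, w.2.1.1⟩ : {l : List ℤ // l ∈ {l : List ℤ |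
      l.length = 2*m ∧ ∀ x ∈ l, x = 1 ∨ x = -1}}))
  intro x y hxy
  have h2 := congrArg Subtype.val hxy
  exact Subtype.ext h2

lemma dyck_even {γ : List ℤ} (h : IsDyckWord γ) : 2 ∣ γ.length := by
  have key : ∀ l : List ℤ, (∀ x ∈ l, x = 1 ∨ x = -1) → ∃ k : ℤ, l.sum + l.length = 2 * k := by
    intro l hl
    induction l with
    | nil => exact ⟨0, by simp⟩
    | cons a t ih =>
      obtain ⟨k, hk⟩ := ih (fun x hx => hl x (by simp [hx]))
      rcases hl a (by simp) with rfl | rfl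
      · refine ⟨k + 1, ?_⟩
        simp only [List.sum_cons, List.length_cons]
        push_cast
        linarith
      · refine ⟨k, ?_⟩
        simp only [List.sum_cons, List.length_cons]
        push_cast
        linarith
  obtain ⟨k, hk⟩ := key γ h.1
  rw [h.2.2] at hk
  simp at hk
  omega

lemma nat_card_sigma {ι : Type*} [Fintype ι] (F : ι → Type*) [∀ i, Finite (F i)] :
    Nat.card (Σ i, F i) = ∑ i, Nat.card (F i) := by
  letI : ∀ i, Fintype (F i) := fun i => Fintype.ofFinite _
  rw [Nat.card_eq_fintype_card]
  rw [Fintype.card_sigma]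
  congr 1
  ext i
  rw [Nat.card_eq_fintype_card]

lemma card_S0 : Nat.card (S 0) = 1 := by
  have hx : (IsDyckWord ([] : List ℤ) ∧ ([] : List ℤ).length = 2 * 0 ∧
      Avoids pUUU ([] : List ℤ) ∧ Avoids pDUD ([] : List ℤ) ∧
      (([] : List ℤ) = [] ∨ pUUD <+: ([] : List ℤ))) := by
    rw [S_prop_iff]
    exact ⟨mem_nil, rfl⟩
  haveI : Unique (S 0) := by
    refine ⟨⟨⟨[], hx⟩⟩, ?_⟩
    rintro ⟨w, hw⟩
    have : w = [] := List.length_eq_zero_iff.1 (by simpa using hw.2.1)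
    subst this
    rfl
  exact Nat.card_unique

lemma card_S1 : Nat.card (S 1) = 0 := by
  haveI : IsEmpty (S 1) := by
    constructor
    rintro ⟨w, hw⟩
    rcases hw.2.2.2.2 with rfl | hp
    · have h2 := hw.2.1
      simp at h2
    · have h1 := hp.length_le
      have h2 := hw.2.1
      simp [pUUD] at h1
      omega
  simp

lemma card_S_succ (n : ℕ) : Nat.card (S (n+2)) =
    ∑ p ∈ Finset.HasAntidiagonal.antidiagonal n, Nat.card (S p.1) * Nat.card (S p.2) := by
  classical
  have hf : ∀ (p : {x : ℕ × ℕ // x ∈ Finset.HasAntidiagonal.antidiagonal n}) (ab : S p.1.1 × S p.1.2),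
      IsDyckWord ([1,1,-1] ++ ab.1.1 ++ [-1] ++ ab.2.1) ∧
      ([1,1,-1] ++ ab.1.1 ++ [-1] ++ ab.2.1).length = 2 * (n+2) ∧
      Avoids pUUU ([1,1,-1] ++ ab.1.1 ++ [-1] ++ ab.2.1) ∧
      Avoids pDUD ([1,1,-1] ++ ab.1.1 ++ [-1] ++ ab.2.1) ∧
      (([1,1,-1] ++ ab.1.1 ++ [-1] ++ ab.2.1) = [] ∨
        pUUD <+: ([1,1,-1] ++ ab.1.1 ++ [-1] ++ ab.2.1)) := by
    rintro ⟨⟨i, j⟩, hp⟩ ⟨a, b⟩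
    rw [Finset.HasAntidiagonal.mem_antidiagonal] at hp
    have ha : Mem a.1 := (S_prop_iff.1 a.2).1
    have hb : Mem b.1 := (S_prop_iff.1 b.2).1
    rw [S_prop_iff]
    refine ⟨mem_construct ha hb, ?_⟩
    rw [W_len]
    have hal : a.1.length = 2 * i := (S_prop_iff.1 a.2).2
    have hbl : b.1.length = 2 * j := (S_prop_iff.1 b.2).2
    show 4 + a.1.length + b.1.length = 2 * (n + 2)
    omega
  set f : (Σ p : {x : ℕ × ℕ // x ∈ Finset.HasAntidiagonal.antidiagonal n}, S p.1.1 × S p.1.2) → S (n+2) :=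
    fun x => ⟨[1,1,-1] ++ x.2.1.1 ++ [-1] ++ x.2.2.1, hf x.1 x.2⟩ with hfdef
  have hbij : Function.Bijective f := by
    constructor
    · rintro ⟨p, ab⟩ ⟨p', ab'⟩ hxy
      have heq : [1,1,-1] ++ ab.1.1 ++ [-1] ++ ab.2.1 =
          [1,1,-1] ++ ab'.1.1 ++ [-1] ++ ab'.2.1 := congrArg Subtype.val hxy
      obtain ⟨h1, h2⟩ := construct_inj (S_prop_iff.1 ab.1.2).1.1 (S_prop_iff.1 ab'.1.2).1.1 heq
      have l1 : ab.1.1.length = 2 * p.1.1 := (S_prop_iff.1 ab.1.2).2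
      have l2 : ab'.1.1.length = 2 * p'.1.1 := (S_prop_iff.1 ab'.1.2).2
      have l3 : ab.2.1.length = 2 * p.1.2 := (S_prop_iff.1 ab.2.2).2
      have l4 : ab'.2.1.length = 2 * p'.1.2 := (S_prop_iff.1 ab'.2.2).2
      obtain rfl : p = p' := by
        apply Subtype.ext
        apply Prod.ext
        · rw [h1] at l1; omega
        · rw [h2] at l3; omega
      exact congrArg (Sigma.mk p) (Prod.ext (Subtype.ext h1) (Subtype.ext h2))
    · rintro ⟨w, hw⟩
      obtain ⟨hmem, hlen⟩ := S_prop_iff.1 hw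
      have hne : w ≠ [] := by
        intro hh
        rw [hh] at hlen
        simp at hlen
      obtain ⟨α, β, hα, hβ, hweq⟩ := mem_decompose hmem hne
      obtain ⟨i, hi⟩ := dyck_even hα.1
      obtain ⟨j, hj⟩ := dyck_even hβ.1
      have hij : i + j = n := by
        rw [hweq] at hlen
        rw [W_len] at hlen
        omega
      refine ⟨⟨⟨⟨i, j⟩, Finset.HasAntidiagonal.mem_antidiagonal.2 hij⟩,
        ⟨⟨α, S_prop_iff.2 ⟨hα, hi⟩⟩, ⟨β, S_prop_iff.2 ⟨hβ, hj⟩⟩⟩⟩, ?_⟩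
      exact Subtype.ext hweq.symm
  rw [← Nat.card_eq_of_bijective f hbij]
  rw [nat_card_sigma]
  rw [← Finset.sum_coe_sort (Finset.HasAntidiagonal.antidiagonal n)
    (fun p => Nat.card (S p.1) * Nat.card (S p.2))]
  congr 1
  ext p
  rw [Nat.card_prod]

open PowerSeries in
/-- The generating function A*(x) of Dyck paths avoiding UUU and DUD and starting
with UUD (or empty), counted by semilength, satisfies
A*(x) = 1 + x² A*(x) / (1 - x² A*(x)). -/
theorem stmt_1 (A : PowerSeries ℚ)
    (hA : ∀ m : ℕ, (PowerSeries.coeff m) A =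
      Nat.card {w : List ℤ // IsDyckWord w ∧ w.length = 2 * m ∧
        Avoids pUUU w ∧ Avoids pDUD w ∧ (w = [] ∨ pUUD <+: w)}) :
    A = 1 + X ^ 2 * A * (1 - X ^ 2 * A)⁻¹ := by
  have key : A = 1 + X ^ 2 * A ^ 2 := by
    ext m
    rw [map_add, PowerSeries.coeff_one]
    match m with
    | 0 =>
      rw [hA 0]
      rw [show (Nat.card {w : List ℤ // IsDyckWord w ∧ w.length = 2 * 0 ∧
        Avoids pUUU w ∧ Avoids pDUD w ∧ (w = [] ∨ pUUD <+: w)}) = 1 from card_S0]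
      have h0 : (PowerSeries.coeff 0) (X ^ 2 * A ^ 2) = 0 := by
        rw [PowerSeries.coeff_mul]
        simp [PowerSeries.coeff_X_pow]
      rw [h0]
      norm_num
    | 1 =>
      rw [hA 1]
      rw [show (Nat.card {w : List ℤ // IsDyckWord w ∧ w.length = 2 * 1 ∧
        Avoids pUUU w ∧ Avoids pDUD w ∧ (w = [] ∨ pUUD <+: w)}) = 0 from card_S1]
      have h0 : (PowerSeries.coeff 1) (X ^ 2 * A ^ 2) = 0 := by
        rw [PowerSeries.coeff_mul]
        rw [Finset.Nat.sum_antidiagonal_eq_sum_range_succ_mk]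
        simp [PowerSeries.coeff_X_pow]
      rw [h0]
      norm_num
    | (n+2) =>
      rw [hA (n+2)]
      rw [show (Nat.card {w : List ℤ // IsDyckWord w ∧ w.length = 2 * (n+2) ∧
        Avoids pUUU w ∧ Avoids pDUD w ∧ (w = [] ∨ pUUD <+: w)}) =
        ∑ p ∈ Finset.HasAntidiagonal.antidiagonal n, Nat.card (S p.1) * Nat.card (S p.2) from card_S_succ n]
      rw [if_neg (by omega), zero_add]
      rw [PowerSeries.coeff_X_pow_mul (A^2) 2 n]
      rw [pow_two, PowerSeries.coeff_mul]
      rw [Nat.cast_sum]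
      apply Finset.sum_congr rfl
      intro p hp
      rw [Nat.cast_mul, hA p.1, hA p.2]
  have hu : PowerSeries.constantCoeff (1 - X ^ 2 * A) ≠ 0 := by
    have : PowerSeries.constantCoeff (1 - X ^ 2 * A) = 1 := by
      rw [map_sub, map_mul, map_pow]
      simp
    rw [this]
    norm_num
  have huinv : (1 - X ^ 2 * A) * (1 - X ^ 2 * A)⁻¹ = 1 :=
    PowerSeries.mul_inv_cancel _ hu
  have hAu : A * (1 - X ^ 2 * A) = 1 := by
    have h1 : A * (1 - X ^ 2 * A) = A - X ^ 2 * A ^ 2 := by ring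
    have h2 : A - X ^ 2 * A ^ 2 = 1 := by
      nth_rewrite 1 [key]
      ring
    rw [h1, h2]
  have h2 : A = (1 - X ^ 2 * A)⁻¹ := by
    calc A = A * ((1 - X ^ 2 * A) * (1 - X ^ 2 * A)⁻¹) := by rw [huinv, mul_one]
    _ = (A * (1 - X ^ 2 * A)) * (1 - X ^ 2 * A)⁻¹ := by ring
    _ = (1 - X ^ 2 * A)⁻¹ := by rw [hAu, one_mul]
  calc A = (1 - X ^ 2 * A)⁻¹ := h2
  _ = ((1 - X ^ 2 * A) + X ^ 2 * A) * (1 - X ^ 2 * A)⁻¹ := by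
      rw [sub_add_cancel, one_mul]
  _ = (1 - X ^ 2 * A) * (1 - X ^ 2 * A)⁻¹ + X ^ 2 * A * (1 - X ^ 2 * A)⁻¹ := by ring
  _ = 1 + X ^ 2 * A * (1 - X ^ 2 * A)⁻¹ := by rw [huinv]
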